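/- The function r(l) = cleaf_2(l), defined on [0, π_2/2] as the inverse of r ↦ ∫_r^1 dt/√(1-t⁴), satisfies the differential equation r''(l) = -2 r(l)³ with initial conditions r(0) = 1 and r'(0) = 0. -/

import Mathlib

open Set Filter intervalIntegral MeasureTheory Topology



noncomputable def cleafI : ℝ → ℝ := fun t => 1 / Real.sqrt (1 - t ^ 4)

lemma pow4_lt {t : ℝ} (h : t ∈ Set.Ioo (-1:ℝ) 1) : t ^ 4 < 1 := by
  have : |t| < 1 := abs_lt.2 ⟨h.1, h.2⟩
  calc t ^ 4 = |t| ^ 4 := by rw [← abs_pow, abs_of_nonneg (by positivity)]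
  _ < 1 := by simpa using pow_lt_one₀ (abs_nonneg t) this (by norm_num : (4:ℕ) ≠ 0)

lemma cleafI_meas : Measurable cleafI := by
  unfold cleafI
  simp only [one_div]
  exact ((Real.continuous_sqrt.measurable).comp
    ((measurable_const.sub ((measurable_id.pow_const 4))))).inv

lemma cleafI_nonneg (t : ℝ) : 0 ≤ cleafI t := by
  unfold cleafI; positivity

lemma cleafI_pos {t : ℝ} (h : t ∈ Set.Ioo (-1:ℝ) 1) : 0 < cleafI t := by
  have h4 := pow4_lt h
  unfold cleafI
  have : 0 < Real.sqrt (1 - t ^ 4) := Real.sqrt_pos.2 (by linarith)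
  positivity

lemma cleafI_contAt {t : ℝ} (h : t ∈ Set.Ioo (-1:ℝ) 1) : ContinuousAt cleafI t := by
  have h4 := pow4_lt h
  have hs : Real.sqrt (1 - t ^ 4) ≠ 0 := ne_of_gt (Real.sqrt_pos.2 (by linarith))
  exact (continuousAt_const.div ((Real.continuous_sqrt.continuousAt).comp
    ((continuous_const.sub (continuous_pow 4)).continuousAt)) hs)

lemma cleafI_intble : IntervalIntegrable cleafI volume 0 1 := by
  have hg : IntervalIntegrable (fun t => (1 - t) ^ (-(1/2) : ℝ)) volume 0 1 := by
    have h := (intervalIntegrable_rpow' (by norm_num : (-1:ℝ) < -(1/2))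
      (a := 0) (b := 1)).comp_sub_left 1
    norm_num at h ⊢
    simpa using h.symm
  refine hg.mono_fun' cleafI_meas.aestronglyMeasurable ?_
  rw [Filter.EventuallyLE]
  filter_upwards [MeasureTheory.ae_restrict_mem measurableSet_uIoc] with t ht
  rw [Set.uIoc_of_le (by norm_num : (0:ℝ) ≤ 1)] at ht
  obtain ⟨ht0, ht1⟩ := ht
  have h1t : (0:ℝ) ≤ 1 - t := by linarith
  have ht3 : t ^ 3 ≤ 1 := pow_le_one₀ ht0.le ht1
  have hle : 1 - t ≤ 1 - t ^ 4 := by nlinarith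
  rw [Real.norm_of_nonneg (cleafI_nonneg t)]
  rw [Real.rpow_neg h1t, ← Real.sqrt_eq_rpow]
  unfold cleafI
  rw [one_div]
  rcases eq_or_lt_of_le ht1 with h1 | h1
  · subst h1; simp
  · have hp : 0 < Real.sqrt (1 - t) := Real.sqrt_pos.2 (by linarith)
    gcongr

noncomputable def cleafF : ℝ → ℝ := fun r => ∫ t in r..1, cleafI t

lemma cleafF_one : cleafF 1 = 0 := integral_same

lemma cleafI_intble' {a b : ℝ} (ha : a ∈ Set.Icc (0:ℝ) 1) (hb : b ∈ Set.Icc (0:ℝ) 1) :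
    IntervalIntegrable cleafI volume a b := by
  apply cleafI_intble.mono_set
  rw [Set.uIcc_of_le (by norm_num : (0:ℝ) ≤ 1)]
  exact Set.uIcc_subset_Icc ha hb

lemma cleafF_cont : ContinuousOn cleafF (Set.Icc 0 1) := by
  have h := continuousOn_primitive_interval_left (f := cleafI) (μ := volume) (a := 0) (b := 1) ?_
  · rwa [Set.uIcc_of_le (by norm_num : (0:ℝ) ≤ 1)] at h
  · rw [Set.uIcc_of_le (by norm_num : (0:ℝ) ≤ 1)]
    exact (intervalIntegrable_iff_integrableOn_Icc_of_le (by norm_num)).1 cleafI_intble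

lemma cleafF_anti : StrictAntiOn cleafF (Set.Icc 0 1) := by
  intro x hx y hy hxy
  have hxi := cleafI_intble' hx ⟨hx.1, hxy.le.trans hy.2⟩ -- x..y? need both in Icc
  have h1 : cleafF x = (∫ t in x..y, cleafI t) + cleafF y := by
    unfold cleafF
    rw [integral_add_adjacent_intervals (cleafI_intble' hx hy) (cleafI_intble' hy (by norm_num))]
  have hpos : 0 < ∫ t in x..y, cleafI t := by
    apply intervalIntegral_pos_of_pos_on (cleafI_intble' hx hy) _ hxy
    intro z hz
    exact cleafI_pos ⟨by linarith [hx.1, hz.1], lt_of_lt_of_le hz.2 hy.2⟩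
  linarith

lemma cleafF_nonneg {r : ℝ} (hr : r ∈ Set.Icc (0:ℝ) 1) : 0 ≤ cleafF r := by
  rcases eq_or_lt_of_le hr.2 with h | h
  · subst h; simp [cleafF_one]
  · have := cleafF_anti hr (by norm_num) h
    simp [cleafF_one] at this; linarith

lemma cleafF_pos : 0 < cleafF 0 := by
  have := cleafF_anti (Set.mem_Icc.2 ⟨le_refl 0, zero_le_one⟩)
    (Set.mem_Icc.2 ⟨zero_le_one, le_refl 1⟩) zero_lt_one
  simpa [cleafF_one] using this

lemma cleafF_deriv {r : ℝ} (hr : r ∈ Set.Ico (0:ℝ) 1) :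
    HasDerivAt cleafF (-(cleafI r)) r := by
  apply integral_hasDerivAt_left (cleafI_intble' ⟨hr.1, hr.2.le⟩ (by norm_num))
  · exact ⟨Set.univ, Filter.univ_mem, cleafI_meas.aestronglyMeasurable⟩
  · exact cleafI_contAt ⟨by linarith [hr.1], hr.2⟩

lemma cleafF_tendsto : Tendsto cleafF (𝓝[<] (1:ℝ)) (𝓝 0) := by
  have h := (cleafF_cont 1 (Set.mem_Icc.2 ⟨zero_le_one, le_refl 1⟩)).tendsto
  rw [cleafF_one] at h
  rw [← nhdsWithin_Ioo_eq_nhdsLT zero_lt_one]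
  exact h.mono_left (nhdsWithin_mono 1 Set.Ioo_subset_Icc_self)

lemma sqrt_tendsto : Tendsto (fun r : ℝ => -Real.sqrt (1 - r ^ 4)) (𝓝[<] (1:ℝ)) (𝓝 0) := by
  have hc : Continuous fun r : ℝ => -Real.sqrt (1 - r ^ 4) := by
    exact (Real.continuous_sqrt.comp (continuous_const.sub (continuous_pow 4))).neg
  have := hc.tendsto 1
  norm_num at this
  exact this.mono_left nhdsWithin_le_nhds

lemma sqrt_hasDeriv {x : ℝ} (hx : x ∈ Set.Ioo (-1:ℝ) 1) :
    HasDerivAt (fun r : ℝ => -Real.sqrt (1 - r ^ 4))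
      (4 * x ^ 3 / (2 * Real.sqrt (1 - x ^ 4))) x := by
  have h4 : x ^ 4 < 1 := pow4_lt hx
  have hne : (1 : ℝ) - x ^ 4 ≠ 0 := by linarith
  have hinner : HasDerivAt (fun r : ℝ => 1 - r ^ 4) (-(4 * x ^ 3)) x := by
    have h := (hasDerivAt_pow 4 x).const_sub 1
    norm_num at h
    convert h using 2
  have := (hinner.sqrt hne).neg
  refine this.congr_deriv ?_
  rw [neg_div, neg_neg]

lemma lim1 : Tendsto (fun r => (r - 1) / cleafF r) (𝓝[<] (1:ℝ)) (𝓝 0) := by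
  apply HasDerivAt.lhopital_zero_left_on_Ioo zero_lt_one
    (f' := fun _ => (1:ℝ)) (g' := fun x => -(cleafI x))
  · intro x _; exact (hasDerivAt_id x).sub_const 1
  · intro x hx; exact cleafF_deriv ⟨hx.1.le, hx.2⟩
  · intro x hx
    exact neg_ne_zero.2 (ne_of_gt (cleafI_pos ⟨by linarith [hx.1], hx.2⟩))
  · have : Tendsto (fun r : ℝ => r - 1) (𝓝 (1:ℝ)) (𝓝 0) := by
      have hcont : Continuous (fun r : ℝ => r - 1) := continuous_id.sub continuous_const
      have h := hcont.tendsto (1:ℝ)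
      norm_num at h; exact h
    exact this.mono_left nhdsWithin_le_nhds
  · exact cleafF_tendsto
  · have heq : (fun x : ℝ => (1:ℝ) / -(cleafI x)) = fun x => -Real.sqrt (1 - x ^ 4) := by
      funext x
      rw [cleafI]
      simp only [div_neg, one_div_one_div]
    rw [heq]
    exact sqrt_tendsto

lemma lim2 : Tendsto (fun r => -Real.sqrt (1 - r ^ 4) / cleafF r) (𝓝[<] (1:ℝ)) (𝓝 (-2)) := by
  apply HasDerivAt.lhopital_zero_left_on_Ioo zero_lt_one
    (f' := fun x => 4 * x ^ 3 / (2 * Real.sqrt (1 - x ^ 4))) (g' := fun x => -(cleafI x))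
  · intro x hx; exact sqrt_hasDeriv ⟨by linarith [hx.1], hx.2⟩
  · intro x hx; exact cleafF_deriv ⟨hx.1.le, hx.2⟩
  · intro x hx
    exact neg_ne_zero.2 (ne_of_gt (cleafI_pos ⟨by linarith [hx.1], hx.2⟩))
  · exact sqrt_tendsto
  · exact cleafF_tendsto
  · apply Filter.Tendsto.congr' (f₁ := fun x : ℝ => -(2 * x ^ 3))
    · filter_upwards [Ioo_mem_nhdsLT_of_mem (Set.mem_Ioc.2 ⟨zero_lt_one, le_refl 1⟩)] with x hx
      have h4 : x ^ 4 < 1 := by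
        have h3 : x ^ 4 ≤ x := by nlinarith [pow_le_one₀ hx.1.le hx.2.le (n := 3), hx.1.le]
        linarith [hx.2]
      have hs : Real.sqrt (1 - x ^ 4) ≠ 0 := ne_of_gt (Real.sqrt_pos.2 (by linarith))
      rw [cleafI]
      field_simp
      ring
    · have : Tendsto (fun x : ℝ => -(2 * x ^ 3)) (𝓝 1) (𝓝 (-(2 * 1 ^ 3))) := by
        exact ((continuous_const.mul (continuous_pow 3)).neg).tendsto 1
      simp only [one_pow, mul_one] at this
      exact this.mono_left nhdsWithin_le_nhds

section
variable (cleaf : ℝ → ℝ)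
  (hmem : ∀ l ∈ Set.Icc 0 (cleafF 0), cleaf l ∈ Set.Icc (0:ℝ) 1 ∧ cleafF (cleaf l) = l)

local notation "s" => Set.Icc (0:ℝ) (cleafF 0)

include hmem

lemma cl_mem {l : ℝ} (hl : l ∈ s) : cleaf l ∈ Set.Icc (0:ℝ) 1 := (hmem l hl).1
lemma cl_F {l : ℝ} (hl : l ∈ s) : cleafF (cleaf l) = l := (hmem l hl).2

lemma cl_eq_iff {l : ℝ} (hl : l ∈ s) {r : ℝ} (hr : r ∈ Set.Icc (0:ℝ) 1)
    (h : cleafF r = l) : cleaf l = r :=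
  cleafF_anti.injOn (cl_mem cleaf hmem hl) hr (by rw [cl_F cleaf hmem hl, h])

lemma cl_zero : cleaf 0 = 1 :=
  cl_eq_iff cleaf hmem (Set.mem_Icc.2 ⟨le_refl 0, cleafF_pos.le⟩)
    (Set.mem_Icc.2 ⟨zero_le_one, le_refl 1⟩) cleafF_one

lemma cl_surj {r : ℝ} (hr : r ∈ Set.Icc (0:ℝ) 1) : ∃ l ∈ s, cleaf l = r := by
  have h1 : cleafF r ∈ s := by
    constructor
    · exact cleafF_nonneg hr
    · rcases eq_or_lt_of_le hr.1 with h | h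
      · rw [← h]
      · exact (cleafF_anti (Set.mem_Icc.2 ⟨le_refl 0, zero_le_one⟩) hr h).le
  exact ⟨cleafF r, h1, cl_eq_iff cleaf hmem h1 hr rfl⟩

lemma cl_lt_one {l : ℝ} (hl : l ∈ s) (h0 : l ≠ 0) : cleaf l < 1 := by
  rcases eq_or_lt_of_le (cl_mem cleaf hmem hl).2 with h | h
  · exfalso; apply h0
    rw [← cl_F cleaf hmem hl, h, cleafF_one]
  · exact h

lemma cl_pos {l : ℝ} (hl : l ∈ s) (h0 : l ≠ cleafF 0) : 0 < cleaf l := by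
  rcases eq_or_lt_of_le (cl_mem cleaf hmem hl).1 with h | h
  · exfalso; apply h0
    rw [← cl_F cleaf hmem hl, ← h]
  · exact h

lemma cl_anti : StrictAntiOn cleaf s := by
  intro x hx y hy hxy
  rcases lt_trichotomy (cleaf x) (cleaf y) with h | h | h
  · exfalso
    have := cleafF_anti (cl_mem cleaf hmem hx) (cl_mem cleaf hmem hy) h
    rw [cl_F cleaf hmem hx, cl_F cleaf hmem hy] at this
    linarith
  · exfalso
    have : x = y := by
      rw [← cl_F cleaf hmem hx, ← cl_F cleaf hmem hy, h]
    linarith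
  · exact h

lemma cl_cont {a : ℝ} (ha : a ∈ s) : ContinuousWithinAt cleaf s a := by
  have hmono : StrictMonoOn (fun l => -cleaf l) s := by
    intro x hx y hy hxy
    simpa using cl_anti cleaf hmem hx hy hxy
  -- right continuity (for a < cleafF 0)
  have hright : a < cleafF 0 → ContinuousWithinAt cleaf (Set.Ici a) a := by
    intro hac
    have hra : 0 < cleaf a := cl_pos cleaf hmem ha (ne_of_lt hac)
    have h : ContinuousWithinAt (fun l => -cleaf l) (Set.Ici a) a := by
      apply hmono.continuousWithinAt_right_of_exists_between
      · exact Filter.mem_of_superset (Icc_mem_nhdsGE_of_mem ⟨le_refl a, hac⟩)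
          (Set.Icc_subset_Icc ha.1 le_rfl)
      · intro b hb
        have hbra : -b < cleaf a := by linarith
        set ρ := max (-b) 0 with hρ
        have hρlt : ρ < cleaf a := max_lt hbra hra
        obtain ⟨l, hls, hlρ⟩ := cl_surj cleaf hmem
          (Set.mem_Icc.2 ⟨le_max_right _ _, hρlt.le.trans (cl_mem cleaf hmem ha).2⟩)
        refine ⟨l, hls, ?_, ?_⟩
        · simp only [hlρ]
          simp only [neg_lt_neg_iff]
          exact hρlt
        · simp only [hlρ, hρ]
          rw [← min_neg_neg]
          simp only [neg_neg, neg_zero]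
          exact min_le_left _ _
    have := h.neg
    exact this.congr (fun x _ => by simp) (by simp)
  have hleft : 0 < a → ContinuousWithinAt cleaf (Set.Iic a) a := by
    intro h0a
    have hra : cleaf a < 1 := cl_lt_one cleaf hmem ha (ne_of_gt h0a)
    have h : ContinuousWithinAt (fun l => -cleaf l) (Set.Iic a) a := by
      apply hmono.continuousWithinAt_left_of_exists_between
      · exact Filter.mem_of_superset (Icc_mem_nhdsLE_of_mem ⟨h0a, le_refl a⟩)
          (Set.Icc_subset_Icc le_rfl ha.2)
      · intro b hb
        have hbra : cleaf a < -b := by linarith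
        set ρ := min (-b) 1 with hρ
        have hρgt : cleaf a < ρ := lt_min hbra hra
        obtain ⟨l, hls, hlρ⟩ := cl_surj cleaf hmem
          (Set.mem_Icc.2 ⟨(cl_mem cleaf hmem ha).1.trans hρgt.le, min_le_right _ _⟩)
        refine ⟨l, hls, ?_, ?_⟩
        · simp only [hlρ, hρ]
          rw [← max_neg_neg]
          simp only [neg_neg]
          exact le_max_left _ _
        · simp only [hlρ]
          simp only [neg_lt_neg_iff]
          exact hρgt
    have := h.neg
    exact this.congr (fun x _ => by simp) (by simp)
  rcases eq_or_lt_of_le ha.1 with h0 | h0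
  · exact ((hright (by rw [← h0]; exact cleafF_pos)).mono
      (by rw [← h0]; exact fun x hx => hx.1))
  · rcases eq_or_lt_of_le ha.2 with hc | hc
    · exact (hleft h0).mono (fun x hx => Set.mem_Iic.2 (le_of_le_of_eq hx.2 hc.symm))
    · exact ((hleft h0).union (hright hc)).mono
        (fun x hx => by rcases le_total x a with h | h; exacts [Or.inl h, Or.inr h])

lemma cl_tendsto_lt_one {l0 : ℝ} (hl0 : l0 ∈ s) (h0 : l0 = 0) :
    Tendsto cleaf (𝓝[s \ {l0}] l0) (𝓝[<] 1) := by
  rw [tendsto_nhdsWithin_iff]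
  constructor
  · have h := (cl_cont cleaf hmem hl0).tendsto
    rw [h0] at h ⊢
    rw [cl_zero cleaf hmem] at h
    exact h.mono_left (nhdsWithin_mono _ Set.diff_subset)
  · filter_upwards [self_mem_nhdsWithin] with x hx
    exact cl_lt_one cleaf hmem hx.1 (by simpa [h0] using hx.2)

lemma cl_hasDeriv {l0 : ℝ} (hl0 : l0 ∈ s) :
    HasDerivWithinAt cleaf (-Real.sqrt (1 - (cleaf l0) ^ 4)) s l0 := by
  rcases eq_or_ne l0 0 with rfl | hne
  · rw [hasDerivWithinAt_iff_tendsto_slope]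
    have h1 : cleaf 0 = 1 := cl_zero cleaf hmem
    have hval : -Real.sqrt (1 - (cleaf 0) ^ 4) = 0 := by
      rw [h1]; norm_num
    rw [hval]
    apply Filter.Tendsto.congr' _ (lim1.comp (cl_tendsto_lt_one cleaf hmem hl0 rfl))
    filter_upwards [self_mem_nhdsWithin] with x hx
    show (cleaf x - 1) / cleafF (cleaf x) = slope cleaf 0 x
    rw [cl_F cleaf hmem hx.1, slope_def_field, h1, sub_zero]
  · set r0 := cleaf l0 with hr0def
    have hl0pos : 0 < l0 := lt_of_le_of_ne hl0.1 (Ne.symm hne)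
    have hr0lt : r0 < 1 := cl_lt_one cleaf hmem hl0 hne
    have hr0mem := cl_mem cleaf hmem hl0
    have hFr0 : cleafF r0 = l0 := cl_F cleaf hmem hl0
    have hF' : HasDerivAt cleafF (-(cleafI r0)) r0 := cleafF_deriv ⟨hr0mem.1, hr0lt⟩
    have hIpos : 0 < cleafI r0 := cleafI_pos ⟨by linarith [hr0mem.1], hr0lt⟩
    have hslopeF : Tendsto (slope cleafF r0) (𝓝[≠] r0) (𝓝 (-(cleafI r0))) :=
      hasDerivAt_iff_tendsto_slope.1 hF'
    have hcomp : Tendsto cleaf (𝓝[s \ {l0}] l0) (𝓝[≠] r0) := by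
      rw [tendsto_nhdsWithin_iff]
      constructor
      · exact ((cl_cont cleaf hmem hl0).tendsto).mono_left (nhdsWithin_mono _ Set.diff_subset)
      · filter_upwards [self_mem_nhdsWithin] with x hx
        intro hxr
        apply hx.2
        have : cleafF (cleaf x) = cleafF r0 := by rw [hxr]
        rw [cl_F cleaf hmem hx.1, hFr0] at this
        simpa using this
    have hlim := (hslopeF.comp hcomp).inv₀ (neg_ne_zero.2 (ne_of_gt hIpos))
    have hval : (-(cleafI r0))⁻¹ = -Real.sqrt (1 - r0 ^ 4) := by
      rw [cleafI]
      simp only [inv_neg, inv_div, div_one]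
    rw [hasDerivWithinAt_iff_tendsto_slope, ← hval]
    apply Filter.Tendsto.congr' _ hlim
    filter_upwards [self_mem_nhdsWithin] with x hx
    show ((slope cleafF r0) (cleaf x))⁻¹ = slope cleaf l0 x
    rw [slope_def_field, slope_def_field, cl_F cleaf hmem hx.1, hFr0, inv_div]

lemma cl_hasDeriv2 {l0 : ℝ} (hl0 : l0 ∈ s) :
    HasDerivWithinAt (fun l => -Real.sqrt (1 - (cleaf l) ^ 4)) (-2 * (cleaf l0) ^ 3) s l0 := by
  rcases eq_or_ne l0 0 with rfl | hne
  · rw [hasDerivWithinAt_iff_tendsto_slope]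
    have h1 : cleaf 0 = 1 := cl_zero cleaf hmem
    have hval : -Real.sqrt (1 - (cleaf 0) ^ 4) = 0 := by rw [h1]; norm_num
    have hval2 : -2 * (cleaf 0) ^ 3 = -2 := by rw [h1]; norm_num
    rw [hval2]
    apply Filter.Tendsto.congr' _ (lim2.comp (cl_tendsto_lt_one cleaf hmem hl0 rfl))
    filter_upwards [self_mem_nhdsWithin] with x hx
    show -Real.sqrt (1 - (cleaf x) ^ 4) / cleafF (cleaf x)
      = slope (fun l => -Real.sqrt (1 - (cleaf l) ^ 4)) 0 x
    rw [cl_F cleaf hmem hx.1, slope_def_field, hval, sub_zero, sub_zero]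
  · set r0 := cleaf l0 with hr0def
    have hl0pos : 0 < l0 := lt_of_le_of_ne hl0.1 (Ne.symm hne)
    have hr0lt : r0 < 1 := cl_lt_one cleaf hmem hl0 hne
    have hr0mem := cl_mem cleaf hmem hl0
    have h4 : r0 ^ 4 < 1 := by
      have : r0 ^ 4 ≤ r0 ^ 1 := pow_le_pow_of_le_one hr0mem.1 hr0lt.le (by norm_num)
      simpa using lt_of_le_of_lt (by simpa using this) hr0lt
    have hs : 0 < Real.sqrt (1 - r0 ^ 4) := Real.sqrt_pos.2 (by linarith)
    have houter : HasDerivAt (fun r : ℝ => -Real.sqrt (1 - r ^ 4))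
        (4 * r0 ^ 3 / (2 * Real.sqrt (1 - r0 ^ 4))) r0 := by
      exact sqrt_hasDeriv ⟨lt_of_lt_of_le neg_one_lt_zero hr0mem.1, hr0lt⟩
    have hcomp := houter.comp_hasDerivWithinAt l0 (cl_hasDeriv cleaf hmem hl0)
    refine hcomp.congr_deriv ?_
    rw [← hr0def]
    field_simp
    ring
end

theorem cleaf_ode (π₂ : ℝ) (hπ : π₂ = 2 * ∫ t in (0:ℝ)..1, 1 / Real.sqrt (1 - t ^ 4))
    (cleaf : ℝ → ℝ)
    (hc : ∀ l ∈ Set.Icc 0 (π₂ / 2), cleaf l ∈ Set.Icc (0:ℝ) 1 ∧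
      (∫ t in (cleaf l)..1, 1 / Real.sqrt (1 - t ^ 4)) = l) :
    (∀ l ∈ Set.Icc 0 (π₂ / 2),
      derivWithin (derivWithin cleaf (Set.Icc 0 (π₂ / 2))) (Set.Icc 0 (π₂ / 2)) l
        = -2 * (cleaf l) ^ 3) ∧
    cleaf 0 = 1 ∧ derivWithin cleaf (Set.Icc 0 (π₂ / 2)) 0 = 0 := by
  have hhalf : π₂ / 2 = cleafF 0 := by
    rw [hπ]
    show 2 * (∫ t in (0:ℝ)..1, 1 / Real.sqrt (1 - t ^ 4)) / 2 = ∫ t in (0:ℝ)..1, cleafI t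
    rw [mul_div_cancel_left₀ _ (two_ne_zero)]
    rfl
  rw [hhalf] at hc ⊢
  have hmem : ∀ l ∈ Set.Icc 0 (cleafF 0), cleaf l ∈ Set.Icc (0:ℝ) 1 ∧ cleafF (cleaf l) = l :=
    hc
  have hud : UniqueDiffOn ℝ (Set.Icc (0:ℝ) (cleafF 0)) := uniqueDiffOn_Icc cleafF_pos
  have h0mem : (0:ℝ) ∈ Set.Icc (0:ℝ) (cleafF 0) := Set.mem_Icc.2 ⟨le_refl 0, cleafF_pos.le⟩
  have hd1 : ∀ l ∈ Set.Icc (0:ℝ) (cleafF 0),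
      derivWithin cleaf (Set.Icc (0:ℝ) (cleafF 0)) l = -Real.sqrt (1 - (cleaf l) ^ 4) :=
    fun l hl => (cl_hasDeriv cleaf hmem hl).derivWithin (hud l hl)
  refine ⟨?_, cl_zero cleaf hmem, ?_⟩
  · intro l hl
    rw [derivWithin_congr (fun x hx => hd1 x hx) (hd1 l hl)]
    exact (cl_hasDeriv2 cleaf hmem hl).derivWithin (hud l hl)
  · rw [hd1 0 h0mem, cl_zero cleaf hmem]
    norm_num
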